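/- Let X be a real k×p matrix such that XᵀX is invertible, and let W be a k×k real positive definite matrix such that XᵀW⁻¹X is invertible. Then the 2p×2p block matrix [[A, B],[Bᵀ, D]] with A = (XᵀW⁻¹X)⁻¹, B = (XᵀW⁻¹X)⁻¹, and D = (XᵀX)⁻¹ Xᵀ W X (XᵀX)⁻¹ is positive semidefinite. (This is the block matrix constructed in the paper's efficiency argument for the weighted complete sketch estimator.) -/

import Mathlib

open Matrix

/-- The block matrix `[[A, B], [Bᵀ, D]]` with `A = B = (Xᵀ W⁻¹ X)⁻¹` and
`D = (XᵀX)⁻¹ Xᵀ W X (XᵀX)⁻¹` is positive semidefinite. -/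
theorem blockMatrix_posSemidef_sketch
    {k p : ℕ} (X : Matrix (Fin k) (Fin p) ℝ) (W : Matrix (Fin k) (Fin k) ℝ)
    (hW : W.PosDef)
    (hX : IsUnit (Xᵀ * X))
    (hXW : IsUnit (Xᵀ * W⁻¹ * X)) :
    (Matrix.fromBlocks
      ((Xᵀ * W⁻¹ * X)⁻¹)
      ((Xᵀ * W⁻¹ * X)⁻¹)
      (((Xᵀ * W⁻¹ * X)⁻¹)ᵀ)
      ((Xᵀ * X)⁻¹ * (Xᵀ * W * X) * (Xᵀ * X)⁻¹)).PosSemidef := by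
  have hWd : IsUnit W.det := hW.det_pos.ne'.isUnit
  have hWsym : Wᵀ = W := by
    simpa [Matrix.conjTranspose_eq_transpose_of_trivial, Matrix.IsSymm] using hW.1
  have hWinvsym : (W⁻¹)ᵀ = W⁻¹ := by
    rw [Matrix.transpose_nonsing_inv, hWsym]
  set S := Xᵀ * W⁻¹ * X with hS
  have hSsym : Sᵀ = S := by
    rw [hS, Matrix.transpose_mul, Matrix.transpose_mul, Matrix.transpose_transpose,
      hWinvsym, Matrix.mul_assoc]
  have hSd : IsUnit S.det := (Matrix.isUnit_iff_isUnit_det _).1 hXW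
  have hXd : IsUnit (Xᵀ * X).det := (Matrix.isUnit_iff_isUnit_det _).1 hX
  have hAsym : (S⁻¹)ᵀ = S⁻¹ := by rw [Matrix.transpose_nonsing_inv, hSsym]
  have h1 : ((Xᵀ * X)⁻¹)ᵀ = (Xᵀ * X)⁻¹ := by
    rw [Matrix.transpose_nonsing_inv, Matrix.transpose_mul, Matrix.transpose_transpose]
  have cW : ∀ M : Matrix (Fin k) (Fin p) ℝ, W * (W⁻¹ * M) = M := fun M => by
    rw [← Matrix.mul_assoc, Matrix.mul_nonsing_inv _ hWd, Matrix.one_mul]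
  have cWi : ∀ M : Matrix (Fin k) (Fin p) ℝ, W⁻¹ * (W * M) = M := fun M => by
    rw [← Matrix.mul_assoc, Matrix.nonsing_inv_mul _ hWd, Matrix.one_mul]
  have cS : Xᵀ * (W⁻¹ * (X * S⁻¹)) = 1 := by
    rw [← Matrix.mul_assoc, ← Matrix.mul_assoc, ← hS]
    exact Matrix.mul_nonsing_inv S hSd
  have cX : Xᵀ * (X * (Xᵀ * X)⁻¹) = 1 := by
    rw [← Matrix.mul_assoc]
    exact Matrix.mul_nonsing_inv _ hXd
  set P : Matrix (Fin k) (Fin p) ℝ := W⁻¹ * X * S⁻¹ with hP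
  set Q : Matrix (Fin k) (Fin p) ℝ := X * (Xᵀ * X)⁻¹ with hQ
  have key : Matrix.fromBlocks (S⁻¹) (S⁻¹) ((S⁻¹)ᵀ)
      ((Xᵀ * X)⁻¹ * (Xᵀ * W * X) * (Xᵀ * X)⁻¹)
      = (Matrix.fromCols P Q)ᵀ * W * Matrix.fromCols P Q := by
    rw [Matrix.transpose_fromCols, Matrix.fromRows_mul,
      Matrix.fromRows_mul_fromCols]
    have hPWP : Pᵀ * W * P = S⁻¹ := by
      rw [hP]
      simp only [Matrix.transpose_mul, hWinvsym, hAsym, Matrix.mul_assoc]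
      rw [cW, cS, Matrix.mul_one]
    have hPWQ : Pᵀ * W * Q = S⁻¹ := by
      rw [hP, hQ]
      simp only [Matrix.transpose_mul, hWinvsym, hAsym, Matrix.mul_assoc]
      rw [cWi, cX, Matrix.mul_one]
    have hQWP : Qᵀ * W * P = (S⁻¹)ᵀ := by
      rw [hP, hQ, hAsym]
      simp only [Matrix.transpose_mul, h1, Matrix.mul_assoc]
      rw [cW]
      simp only [← Matrix.mul_assoc]
      have hinv : (Xᵀ * X)⁻¹ * Xᵀ * X = 1 := by
        rw [Matrix.mul_assoc]; exact Matrix.nonsing_inv_mul _ hXd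
      rw [hinv, Matrix.one_mul]
    have hQWQ : Qᵀ * W * Q = (Xᵀ * X)⁻¹ * (Xᵀ * W * X) * (Xᵀ * X)⁻¹ := by
      rw [hQ]
      simp only [Matrix.transpose_mul, h1, Matrix.mul_assoc]
    rw [hPWP, hPWQ, hQWP, hQWQ]
  rw [key]
  have := hW.posSemidef.conjTranspose_mul_mul_same (Matrix.fromCols P Q)
  rwa [Matrix.conjTranspose_eq_transpose_of_trivial] at this
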